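/- The racing-based consensus algorithm satisfies validity: any decided value was proposed by some process. -/
import Mathlib


/-- Validity of the racing-based consensus: any decided value was proposed
(i.e., is the input of some process). -/
theorem stmt6 {P V : Type} (input : P → V)
    (proposed returned : ℕ → V → Prop) (decided : V → Prop)
    -- a process proposes either its input or a value returned from an
    -- earlier grafarius in the racing order
    (hprop : ∀ k v, proposed k v → (∃ p, input p = v) ∨ ∃ j, j < k ∧ returned j v)
    -- grafarius validity: any returned value was proposed to that grafarius
    (hret : ∀ k v, returned k v → proposed k v)
    -- a decided value is returned (committed) at some grafarius
    (hdec : ∀ v, decided v → ∃ k, returned k v) :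
    ∀ v, decided v → ∃ p, input p = v := by
  have key : ∀ k v, returned k v → ∃ p, input p = v := by
    intro k
    induction k using Nat.strong_induction_on with
    | _ k ih =>
      intro v hv
      rcases hprop k v (hret k v hv) with h | ⟨j, hj, hr⟩
      · exact h
      · exact ih j hj v hr
  intro v hv
  obtain ⟨k, hk⟩ := hdec v hv
  exact key k v hk
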